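/- Let θ₁, θ₂ : ℝ → ℝ be C¹ functions with θ₁(0) = θ₂(0) = π/2, θᵢ'(0) < 0, and θᵢ(x) ∈ (0, π/2) for x > 0. For t ∈ [0,1] define θᵗ(x) = arcsin(t sin θ₁(x) + (1-t) sin θ₂(x)) for x ≥ 0. Then θᵗ is differentiable at 0 from the right and its right derivative at 0 equals -√(t·θ₁'(0)² + (1-t)·θ₂'(0)²). -/

import Mathlib

open Real Set Filter

private lemma one_sub_cos (u : ℝ) : 1 - Real.cos u = 2 * Real.sin (u/2)^2 := by
  have h := Real.cos_two_mul' (u/2)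
  rw [show 2*(u/2) = u by ring] at h
  nlinarith [Real.sin_sq_add_cos_sq (u/2)]

private lemma sinc_lim : Tendsto (fun u : ℝ => Real.sin u / u) (nhdsWithin 0 {(0:ℝ)}ᶜ) (nhds 1) := by
  have h : HasDerivAt Real.sin 1 0 := by simpa using Real.hasDerivAt_sin 0
  have := hasDerivAt_iff_tendsto_slope.mp h
  refine this.congr (fun u => ?_)
  simp [slope_def_field]

private lemma sinc_inv_lim :
    Tendsto (fun u : ℝ => u / Real.sin u) (nhdsWithin 0 {(0:ℝ)}ᶜ) (nhds 1) := by
  have := sinc_lim.inv₀ (one_ne_zero)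
  rw [inv_one] at this
  refine this.congr (fun u => ?_)
  rw [inv_div]

private lemma theta_slope (θ : ℝ → ℝ) (h : ContDiff ℝ 1 θ) (h0 : θ 0 = π / 2) :
    Tendsto (fun x => (π/2 - θ x) / x) (nhdsWithin 0 (Ioi (0:ℝ))) (nhds (-(deriv θ 0))) := by
  have hd : HasDerivAt θ (deriv θ 0) 0 := ((h.differentiable one_ne_zero) 0).hasDerivAt
  have h1 := (hasDerivAt_iff_tendsto_slope.mp hd).neg
  have h2 : Tendsto (fun x => -(slope θ 0 x)) (nhdsWithin 0 (Ioi (0:ℝ))) (nhds (-(deriv θ 0))) :=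
    h1.mono_left (nhdsWithin_mono _ (fun x hx => ne_of_gt hx))
  refine h2.congr (fun x => ?_)
  rw [slope_def_field, h0]
  ring

private lemma theta_to_zero (θ : ℝ → ℝ) (h : ContDiff ℝ 1 θ) (h0 : θ 0 = π / 2)
    (hr : ∀ x : ℝ, 0 < x → θ x ∈ Ioo 0 (π / 2)) :
    Tendsto (fun x => π/2 - θ x) (nhdsWithin 0 (Ioi (0:ℝ))) (nhdsWithin 0 (Ioi (0:ℝ))) := by
  rw [tendsto_nhdsWithin_iff]
  constructor
  · have h1 : Tendsto θ (nhds 0) (nhds (π/2)) := by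
      rw [← h0]; exact (h.continuous.tendsto 0)
    have := (tendsto_const_nhds.sub (h1.mono_left nhdsWithin_le_nhds) :
      Tendsto (fun x => π/2 - θ x) (nhdsWithin 0 (Ioi (0:ℝ))) (nhds (π/2 - π/2)))
    simpa using this
  · filter_upwards [self_mem_nhdsWithin] with x hx
    exact sub_pos.mpr (hr x hx).2

private lemma key_lim (θ : ℝ → ℝ) (h : ContDiff ℝ 1 θ) (h0 : θ 0 = π / 2)
    (hr : ∀ x : ℝ, 0 < x → θ x ∈ Ioo 0 (π / 2)) :
    Tendsto (fun x => (1 - Real.sin (θ x)) / x^2) (nhdsWithin 0 (Ioi (0:ℝ)))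
      (nhds ((deriv θ 0)^2 / 2)) := by
  set d := deriv θ 0 with hd
  -- u x / 2 tends to 0 within complement of {0}
  have ht0 := theta_to_zero θ h h0 hr
  have hu2 : Tendsto (fun x => (π/2 - θ x)/2) (nhdsWithin 0 (Ioi (0:ℝ)))
      (nhdsWithin 0 {(0:ℝ)}ᶜ) := by
    rw [tendsto_nhdsWithin_iff]
    refine ⟨by simpa using (ht0.mono_right nhdsWithin_le_nhds).div_const 2, ?_⟩
    filter_upwards [self_mem_nhdsWithin] with x hx
    exact ne_of_gt (by have := (hr x hx).2; linarith : (0:ℝ) < (π/2 - θ x)/2)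
  -- sin(u/2)/(u/2) → 1
  have hsinc : Tendsto (fun x => Real.sin ((π/2 - θ x)/2) / ((π/2 - θ x)/2))
      (nhdsWithin 0 (Ioi (0:ℝ))) (nhds 1) := sinc_lim.comp hu2
  -- u/(2x) → -d/2
  have hux : Tendsto (fun x => (π/2 - θ x)/x/2) (nhdsWithin 0 (Ioi (0:ℝ))) (nhds (-d/2)) :=
    (theta_slope θ h h0).div_const 2
  -- sin(u/2)/x → -d/2
  have hhalf : Tendsto (fun x => Real.sin ((π/2 - θ x)/2) / x)
      (nhdsWithin 0 (Ioi (0:ℝ))) (nhds (-d/2)) := by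
    have hmul := hsinc.mul hux
    rw [one_mul] at hmul
    refine hmul.congr' ?_
    filter_upwards [self_mem_nhdsWithin] with x hx
    have hx0 : x ≠ 0 := ne_of_gt hx
    have hu0 : (π/2 - θ x) ≠ 0 := ne_of_gt (sub_pos.mpr (hr x hx).2)
    set u := π/2 - θ x with hu
    show Real.sin (u/2) / (u/2) * (u / x / 2) = Real.sin (u/2) / x
    generalize Real.sin (u/2) = s
    field_simp
  -- conclude
  have hsq : Tendsto (fun x => 2 * (Real.sin ((π/2 - θ x)/2) / x)^2)
      (nhdsWithin 0 (Ioi (0:ℝ))) (nhds (2 * (-d/2)^2)) := (hhalf.pow 2).const_mul 2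
  have : (2 : ℝ) * (-d/2)^2 = d^2/2 := by ring
  rw [this] at hsq
  refine hsq.congr (fun x => ?_)
  have : Real.sin (θ x) = Real.cos (π/2 - θ x) := (Real.cos_pi_div_two_sub _).symm
  rw [this, one_sub_cos]
  ring

private lemma combo_lt (t a b u : ℝ) (h0 : 0 ≤ t) (h1 : t ≤ 1) (ha : a < u) (hb : b < u) :
    t*a + (1-t)*b < u := by
  rcases le_total a b with hc|hc
  · nlinarith [mul_nonneg h0 (sub_nonneg.mpr hc)]
  · nlinarith [mul_nonneg (sub_nonneg.mpr h1) (sub_nonneg.mpr hc)]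

private lemma combo_gt (t a b : ℝ) (h0 : 0 ≤ t) (h1 : t ≤ 1) (ha : 0 < a) (hb : 0 < b) :
    0 < t*a + (1-t)*b := by
  have := combo_lt t (-a) (-b) 0 h0 h1 (by linarith) (by linarith)
  nlinarith



theorem stmt_4 (θ₁ θ₂ : ℝ → ℝ) (h₁ : ContDiff ℝ 1 θ₁) (h₂ : ContDiff ℝ 1 θ₂)
    (h10 : θ₁ 0 = π / 2) (h20 : θ₂ 0 = π / 2)
    (hd1 : deriv θ₁ 0 < 0) (hd2 : deriv θ₂ 0 < 0)
    (hr1 : ∀ x : ℝ, 0 < x → θ₁ x ∈ Ioo 0 (π / 2))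
    (hr2 : ∀ x : ℝ, 0 < x → θ₂ x ∈ Ioo 0 (π / 2))
    (t : ℝ) (ht : t ∈ Icc (0:ℝ) 1) :
    HasDerivWithinAt
      (fun x : ℝ => Real.arcsin (t * Real.sin (θ₁ x) + (1 - t) * Real.sin (θ₂ x)))
      (-Real.sqrt (t * (deriv θ₁ 0) ^ 2 + (1 - t) * (deriv θ₂ 0) ^ 2))
      (Ici 0) 0 := by
  obtain ⟨ht0, ht1⟩ := ht
  set d1 := deriv θ₁ 0 with hd1'
  set d2 := deriv θ₂ 0 with hd2'
  set A := t * d1^2 + (1-t) * d2^2 with hA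
  set F := fun x : ℝ => t * Real.sin (θ₁ x) + (1 - t) * Real.sin (θ₂ x) with hF
  have hF0 : F 0 = 1 := by simp [hF, h10, h20]
  -- bounds on F
  have hFmem : ∀ x : ℝ, 0 < x → F x ∈ Ioo (0:ℝ) 1 := by
    intro x hx
    obtain ⟨a1, b1⟩ := hr1 x hx
    obtain ⟨a2, b2⟩ := hr2 x hx
    have pi_pos := Real.pi_pos
    have s1pos : 0 < Real.sin (θ₁ x) := Real.sin_pos_of_pos_of_lt_pi a1 (by linarith)
    have s2pos : 0 < Real.sin (θ₂ x) := Real.sin_pos_of_pos_of_lt_pi a2 (by linarith)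
    have s1lt : Real.sin (θ₁ x) < 1 := by
      have := Real.strictMonoOn_sin (by constructor <;> [linarith; linarith] :
          θ₁ x ∈ Icc (-(π/2)) (π/2)) (by constructor <;> linarith : (π/2) ∈ Icc (-(π/2)) (π/2)) b1
      simpa using this
    have s2lt : Real.sin (θ₂ x) < 1 := by
      have := Real.strictMonoOn_sin (by constructor <;> [linarith; linarith] :
          θ₂ x ∈ Icc (-(π/2)) (π/2)) (by constructor <;> linarith : (π/2) ∈ Icc (-(π/2)) (π/2)) b2
      simpa using this
    exact ⟨combo_gt t _ _ ht0 ht1 s1pos s2pos, combo_lt t _ _ _ ht0 ht1 s1lt s2lt⟩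
  -- limits
  have L1 := key_lim θ₁ h₁ h10 hr1
  have L2 := key_lim θ₂ h₂ h20 hr2
  have LF : Tendsto (fun x => (1 - F x) / x^2) (nhdsWithin 0 (Ioi (0:ℝ))) (nhds (A/2)) := by
    have hadd := (L1.const_mul t).add (L2.const_mul (1-t))
    have heq : t * (d1^2/2) + (1-t) * (d2^2/2) = A/2 := by rw [hA]; ring
    rw [heq] at hadd
    refine hadd.congr fun x => ?_
    simp only [hF]; ring
  have hFcont : Continuous F := by
    exact (continuous_const.mul (Real.continuous_sin.comp h₁.continuous)).add
      (continuous_const.mul (Real.continuous_sin.comp h₂.continuous))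
  have hFto1 : Tendsto F (nhdsWithin 0 (Ioi (0:ℝ))) (nhds 1) := by
    have := (hFcont.tendsto 0).mono_left (nhdsWithin_le_nhds (s := Ioi (0:ℝ)))
    rwa [hF0] at this
  have LA : Tendsto (fun x => (1 - (F x)^2) / x^2) (nhdsWithin 0 (Ioi (0:ℝ))) (nhds A) := by
    have hplus : Tendsto (fun x => 1 + F x) (nhdsWithin 0 (Ioi (0:ℝ))) (nhds 2) := by
      have := tendsto_const_nhds (α := ℝ) (x := (1:ℝ)) (f := nhdsWithin 0 (Ioi (0:ℝ))) |>.add hFto1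
      norm_num at this; exact this
    have hmul := LF.mul hplus
    rw [show A/2 * 2 = A by ring] at hmul
    refine hmul.congr fun x => ?_
    ring
  have Lsqrt : Tendsto (fun x => Real.sqrt (1 - (F x)^2) / x) (nhdsWithin 0 (Ioi (0:ℝ)))
      (nhds (Real.sqrt A)) := by
    refine LA.sqrt.congr' ?_
    filter_upwards [self_mem_nhdsWithin] with x hx
    have hmem := hFmem x hx
    have h1F : 0 ≤ 1 - (F x)^2 := by nlinarith [hmem.1, hmem.2]
    rw [Real.sqrt_div h1F, Real.sqrt_sq (le_of_lt hx)]
  -- the angle g x = π/2 - arcsin (F x)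
  have hgpos : ∀ x : ℝ, 0 < x → 0 < π/2 - Real.arcsin (F x) := fun x hx =>
    sub_pos.mpr (Real.arcsin_lt_pi_div_two.mpr (hFmem x hx).2)
  have hg0 : Tendsto (fun x => π/2 - Real.arcsin (F x)) (nhdsWithin 0 (Ioi (0:ℝ)))
      (nhdsWithin 0 {(0:ℝ)}ᶜ) := by
    rw [tendsto_nhdsWithin_iff]
    constructor
    · have harc : Tendsto (fun x => Real.arcsin (F x)) (nhdsWithin 0 (Ioi (0:ℝ))) (nhds (π/2)) := by
        have h1 := Real.continuous_arcsin.tendsto 1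
        rw [Real.arcsin_one] at h1
        exact h1.comp hFto1
      simpa using (tendsto_const_nhds.sub harc :
        Tendsto (fun x => π/2 - Real.arcsin (F x)) (nhdsWithin 0 (Ioi (0:ℝ))) (nhds (π/2 - π/2)))
    · filter_upwards [self_mem_nhdsWithin] with x hx
      exact ne_of_gt (hgpos x hx)
  have hginv := sinc_inv_lim.comp hg0
  have hsing : ∀ x : ℝ, Real.sin (π/2 - Real.arcsin (F x)) = Real.sqrt (1 - (F x)^2) := fun x => by
    rw [Real.sin_pi_div_two_sub, Real.cos_arcsin]
  have Lg : Tendsto (fun x => (π/2 - Real.arcsin (F x)) / x) (nhdsWithin 0 (Ioi (0:ℝ)))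
      (nhds (Real.sqrt A)) := by
    have hmul := hginv.mul Lsqrt
    rw [one_mul] at hmul
    refine hmul.congr' ?_
    filter_upwards [self_mem_nhdsWithin] with x hx
    have hspos : 0 < Real.sin (π/2 - Real.arcsin (F x)) := by
      refine Real.sin_pos_of_pos_of_lt_pi (hgpos x hx) ?_
      have := Real.arcsin_pos.mpr (hFmem x hx).1
      have := Real.pi_pos
      linarith
    show (π/2 - Real.arcsin (F x)) / Real.sin (π/2 - Real.arcsin (F x)) *
        (Real.sqrt (1 - (F x)^2) / x) = _
    have hs : Real.sin (π/2 - Real.arcsin (F x)) ≠ 0 := ne_of_gt hspos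
    rw [← hsing x, div_mul_div_comm, mul_comm (π/2 - Real.arcsin (F x)), mul_div_mul_left _ _ hs]
  -- conclude
  rw [hasDerivWithinAt_iff_tendsto_slope, Ici_sdiff_left]
  have hneg := Lg.neg
  refine Tendsto.congr' ?_ hneg
  filter_upwards [self_mem_nhdsWithin] with x hx
  rw [slope_def_field]
  have hval : Real.arcsin (t * Real.sin (θ₁ 0) + (1 - t) * Real.sin (θ₂ 0)) = π/2 := by
    rw [h10, h20]; simp
  simp only [hval]
  rw [sub_zero]
  show -((π/2 - Real.arcsin (F x)) / x) = (Real.arcsin (F x) - π/2) / x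
  ring
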